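/- Let P be a Łukasiewicz path and T = τ(P) the plane tree associated to P by the classical bijection. Then depth(P) = lthorn(T). -/

import Mathlib

/-! ## Plane trees -/

/-- A plane tree: a root together with an ordered (left-to-right) list of subtrees.
A node is a *leaf* if it has no children, and *internal* otherwise. -/
inductive PTree : Type where
  | node : List PTree → PTree


namespace Luka

/-! ## Łukasiewicz paths

A path is encoded by its list of step increments: the step `(1,k)` (an up-step `U_k` of
degree `k`) is encoded by `k : ℤ` with `k ≥ 0`, and the down step `D = (1,-1)` by `-1`. -/

/-- `P` is a Łukasiewicz path: it is nonempty, uses steps `(1,k)` with `k ≥ -1`,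
stays (weakly) above the `x`-axis before its last step, and ends at height `-1`
(so that it goes strictly below the axis only at the last step, which is forced
to be the down-step `D`). -/
def IsLukas (P : List ℤ) : Prop :=
  P ≠ [] ∧ (∀ s ∈ P, -1 ≤ s) ∧ (∀ n, n < P.length → 0 ≤ (P.take n).sum) ∧ P.sum = -1

/-- The degrees of the up-steps of `P`, from left to right (the *profile* of `P`). -/
def upDegs (P : List ℤ) : List ℕ := (P.filter (fun s => 0 ≤ s)).map Int.toNat

/-- The profile multiset `𝔐(P)`: the multiset of degrees of the up-steps of `P`. -/
def profileM (P : List ℤ) : Multiset ℕ := (upDegs P : Multiset ℕ)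

/-- The degree of the first up-step of `P`, if any. -/
def firstUp? (P : List ℤ) : Option ℕ := (upDegs P).head?

/-- The degree of the last up-step of `P`, if any. -/
def lastUp? (P : List ℤ) : Option ℕ := (upDegs P).getLast?

/-- Auxiliary: starting from height `h`, record the starting height of every up-step. -/
def areaVecAux : ℤ → List ℤ → List ℤ
  | _, [] => []
  | h, s :: rest => (if 0 ≤ s then [h] else []) ++ areaVecAux (h + s) rest

/-- The area vector `Area(P)`: the `i`-th entry is the `y`-coordinate of the starting
point of the `i`-th up-step of `P`. -/
def areaVec (P : List ℤ) : List ℤ := areaVecAux 0 P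

/-- `area(P)`: the sum of the entries of the area vector (entries of a Łukasiewicz
path are nonnegative, so taking `Int.toNat` entrywise is harmless). -/
def area (P : List ℤ) : ℕ := ((areaVec P).map Int.toNat).sum

/-- Auxiliary computation of the depth values: `cur` is the depth value of the previous
step (`0` initially), and `stack` holds the pending depth values of the future matching
down-steps (top of the stack = value for the next matching down-step to come).
Reading an up-step `U_k` whose value is `cur` (inherited from the previous step) pushes
the values `cur+1, …, cur+k` for its `k` matching down-steps (its first matching
down-step, which crosses its topmost interior level, gets `cur+1`, etc.); reading a
down-step pops its value.  The list returned records the value `d_i` of each up-step,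
from left to right. -/
def depthVecAux : ℕ → List ℕ → List ℤ → List ℕ
  | _, _, [] => []
  | cur, stack, s :: rest =>
    if 0 ≤ s then
      cur :: depthVecAux cur ((List.range s.toNat).map (fun i => cur + i + 1) ++ stack) rest
    else
      match stack with
      | [] => depthVecAux cur [] rest
      | v :: st => depthVecAux v st rest

/-- The depth vector `Depth(P)`: the values `d_i` at the up-steps of `P`, left to right. -/
def depthVec (P : List ℤ) : List ℕ := depthVecAux 0 [] P

/-- `depth(P)`: the sum of the entries of the depth vector. -/
def depth (P : List ℤ) : ℕ := (depthVec P).sum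

/-- `P ∈ 𝓛_M`. -/
def MemL (M : Multiset ℕ) (P : List ℤ) : Prop := IsLukas P ∧ profileM P = M

/-- `P ∈ 𝓛_{a,M}`: first up-step of degree `a`, profile multiset `M ⊎ {a}`. -/
def MemLa (a : ℕ) (M : Multiset ℕ) (P : List ℤ) : Prop :=
  IsLukas P ∧ firstUp? P = some a ∧ profileM P = a ::ₘ M

/-- `P ∈ 𝓛_{M,b}`: last up-step of degree `b`, profile multiset `M ⊎ {b}`. -/
def MemLb (M : Multiset ℕ) (b : ℕ) (P : List ℤ) : Prop :=
  IsLukas P ∧ lastUp? P = some b ∧ profileM P = b ::ₘ M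

/-- `P ∈ 𝓛_{a,M,b}`: first up-step of degree `a`, last up-step of degree `b`,
profile multiset `M ⊎ {a, b}`. -/
def MemLab (a : ℕ) (M : Multiset ℕ) (b : ℕ) (P : List ℤ) : Prop :=
  IsLukas P ∧ firstUp? P = some a ∧ lastUp? P = some b ∧ profileM P = a ::ₘ b ::ₘ M

/-! ## Plane-tree statistics -/

/-- The (ordered) children of the root of a plane tree. -/
def children : PTree → List PTree
  | .node ts => ts

/-- The degree of (the root of) a plane tree: its number of children. -/
def numChildren (t : PTree) : ℕ := (children t).length

mutual
/-- Number of internal nodes of a plane tree. -/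
def internCount : PTree → ℕ
  | .node [] => 0
  | .node (t :: ts) => 1 + internCountL (t :: ts)
def internCountL : List PTree → ℕ
  | [] => 0
  | t :: ts => internCount t + internCountL ts
end

mutual
/-- `lthornT T` = the sum of `lthorn(u)` over all internal nodes `u` of `T`, where
`lthorn(u)` is the number of descending edges of strict ancestors `v` of `u` lying to
the left of the path from `v` to `u`.  (Every internal node of the subtree rooted at
the `i`-th child (0-indexed) of a node gains `i` left thorns from that node.) -/
def lthornT : PTree → ℕ
  | .node ts => lthornL 0 ts
def lthornL : ℕ → List PTree → ℕ
  | _, [] => 0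
  | i, t :: ts => lthornT t + i * internCount t + lthornL (i + 1) ts
end

mutual
/-- `rthornT T` = the sum of `rthorn(u)` over all internal nodes `u` of `T`, where
`rthorn(u)` is the number of descending edges of strict ancestors `v` of `u` lying to
the right of the path from `v` to `u`. -/
def rthornT : PTree → ℕ
  | .node ts => rthornL ts
def rthornL : List PTree → ℕ
  | [] => 0
  | t :: ts => rthornT t + ts.length * internCount t + rthornL ts
end

mutual
/-- The list of the values `lthorn(u)` for the internal nodes `u` of `T`, in
contour-walk (preorder) order. -/
def lthornList : PTree → List ℕ
  | .node [] => []
  | .node (t :: ts) => 0 :: lthornLL 0 (t :: ts)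
def lthornLL : ℕ → List PTree → List ℕ
  | _, [] => []
  | i, t :: ts => (lthornList t).map (· + i) ++ lthornLL (i + 1) ts
end

mutual
/-- The list of the values `rthorn(u)` for the internal nodes `u` of `T`, in
contour-walk (preorder) order. -/
def rthornList : PTree → List ℕ
  | .node [] => []
  | .node (t :: ts) => 0 :: rthornLL (t :: ts)
def rthornLL : List PTree → List ℕ
  | [] => []
  | t :: ts => (rthornList t).map (· + ts.length) ++ rthornLL ts
end

/-! ## The bijections `λ` and `τ` -/

mutual
/-- `λ`: record each node of the tree at its first visit in the left-to-right contour
walk: `U_k` (i.e. `k`) for an internal node with `k+1` children, `D` (i.e. `-1`)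
for a leaf. -/
def lambdaT : PTree → List ℤ
  | .node ts => ((ts.length : ℤ) - 1) :: lambdaL ts
def lambdaL : List PTree → List ℤ
  | [] => []
  | t :: ts => lambdaT t ++ lambdaL ts
end

/-- Auxiliary for `τ`: reading the path from right to left, maintain the stack of the
already-built subtrees (in left-to-right order); a down-step `D` creates a leaf and an
up-step `U_k` grabs the `k+1` topmost subtrees as its children.  This builds the same
tree as the left-to-right "leftmost bud" construction. -/
def tauStack (P : List ℤ) : List PTree :=
  P.foldr (fun s st =>
    if s < 0 then PTree.node [] :: st
    else PTree.node (st.take (s.toNat + 1)) :: st.drop (s.toNat + 1)) []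

/-- `τ`: the plane tree associated with a Łukasiewicz path. -/
def tau (P : List ℤ) : PTree := (tauStack P).headD (.node [])

mutual
/-- The mirror of a plane tree: reverse the left-to-right order of the children of
every internal node. -/
def mir : PTree → PTree
  | .node ts => .node (mirL ts).reverse
def mirL : List PTree → List PTree
  | [] => []
  | t :: ts => mir t :: mirL ts
end

mutual
/-- The subtrees rooted at the internal nodes of `T`, in contour-walk (preorder)
order. -/
def internalSubtrees : PTree → List PTree
  | .node [] => []
  | .node (t :: ts) => .node (t :: ts) :: internalSubtreesL (t :: ts)
def internalSubtreesL : List PTree → List PTree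
  | [] => []
  | t :: ts => internalSubtrees t ++ internalSubtreesL ts
end

/-- The multiset of degrees of the non-root internal nodes of `T`. -/
def nonRootInternalDegs (T : PTree) : Multiset ℕ :=
  (((internalSubtreesL (children T)).map numChildren : List ℕ) : Multiset ℕ)

/-! ## Lodestars and the lodestar swap -/

/-- A node is a lodestar-type node if it is internal and all its children are leaves. -/
def isLodestarNode (t : PTree) : Bool :=
  !(children t).isEmpty && (children t).all (fun c => (children c).isEmpty)

mutual
/-- The subtree rooted at the *left lodestar* of `T`: the first internal node, in
contour-walk (preorder) order, all of whose children are leaves (if it exists). -/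
def leftLode? : PTree → Option PTree
  | .node ts =>
    if isLodestarNode (.node ts) then some (.node ts) else leftLodeL? ts
def leftLodeL? : List PTree → Option PTree
  | [] => none
  | t :: ts =>
    match leftLode? t with
    | some r => some r
    | none => leftLodeL? ts
end

mutual
/-- The subtree rooted at the *right lodestar* of `T`: the last internal node, in
contour-walk (preorder) order, all of whose children are leaves (if it exists). -/
def rightLode? : PTree → Option PTree
  | .node ts =>
    match rightLodeL? ts with
    | some r => some r
    | none => if isLodestarNode (.node ts) then some (.node ts) else none
def rightLodeL? : List PTree → Option PTree
  | [] => none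
  | t :: ts =>
    match rightLodeL? ts with
    | some r => some r
    | none => rightLode? t
end

mutual
/-- Replace the left lodestar of `T` (first preorder all-leaf-children internal node)
by the tree `r`; `none` if `T` has no internal node. -/
def replF : PTree → PTree → Option PTree
  | r, .node ts =>
    if isLodestarNode (.node ts) then some r
    else (replFL r ts).map PTree.node
def replFL : PTree → List PTree → Option (List PTree)
  | _, [] => none
  | r, t :: ts =>
    match replF r t with
    | some t' => some (t' :: ts)
    | none => (replFL r ts).map (t :: ·)
end

mutual
/-- Replace the right lodestar of `T` (last preorder all-leaf-children internal node)
by the tree `r`; `none` if `T` has no internal node. -/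
def replL : PTree → PTree → Option PTree
  | r, .node ts =>
    match replLL r ts with
    | some ts' => some (.node ts')
    | none => if isLodestarNode (.node ts) then some r else none
def replLL : PTree → List PTree → Option (List PTree)
  | _, [] => none
  | r, t :: ts =>
    match replLL r ts with
    | some ts' => some (t :: ts')
    | none => (replL r t).map (· :: ts)
end

/-- The lodestar swap: exchange the subtrees rooted at the left lodestar and the
right lodestar of `T` (each a node together with its pendant leaves). -/
def lodeSwap (T : PTree) : PTree :=
  match leftLode? T, rightLode? T with
  | some L, some R => ((replF R T).bind (replL L)).getD T
  | _, _ => T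

end Luka
namespace Luka
theorem depthVecAux_up {s : ℤ} (hs : 0 ≤ s) (cur : ℕ) (stack : List ℕ) (rest : List ℤ) :
    depthVecAux cur stack (s :: rest)
      = cur :: depthVecAux cur ((List.range s.toNat).map (fun i => cur + i + 1) ++ stack) rest := by
  rw [depthVecAux.eq_def]
  simp only [if_pos hs]

theorem depthVecAux_down {s : ℤ} (hs : ¬ 0 ≤ s) (cur v : ℕ) (st : List ℕ) (rest : List ℤ) :
    depthVecAux cur (v :: st) (s :: rest) = depthVecAux v st rest := by
  rw [depthVecAux.eq_def]
  simp only [if_neg hs]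

theorem depthVecAux_down_nil {s : ℤ} (hs : ¬ 0 ≤ s) (cur : ℕ) (rest : List ℤ) :
    depthVecAux cur [] (s :: rest) = depthVecAux cur [] rest := by
  rw [depthVecAux.eq_def]
  simp only [if_neg hs]
end Luka
namespace Luka

theorem tauStack_cons (s : ℤ) (P : List ℤ) :
    tauStack (s :: P) = if s < 0 then PTree.node [] :: tauStack P
      else PTree.node ((tauStack P).take (s.toNat + 1)) :: (tauStack P).drop (s.toNat + 1) := by
  simp [tauStack]

mutual
theorem tauStack_lambdaT (T : PTree) (Q : List ℤ) :
    tauStack (lambdaT T ++ Q) = T :: tauStack Q := by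
  cases T with
  | node ts =>
    rw [lambdaT, List.cons_append, tauStack_cons, tauStack_lambdaL ts Q]
    cases ts with
    | nil => simp
    | cons t ts' =>
      have h1 : ¬ ((((t :: ts').length : ℤ) - 1) < 0) := by
        simp
      rw [if_neg h1]
      have h2 : (((t :: ts').length : ℤ) - 1).toNat + 1 = (t :: ts').length := by
        simp
      rw [h2, List.take_left, List.drop_left]
theorem tauStack_lambdaL (ts : List PTree) (Q : List ℤ) :
    tauStack (lambdaL ts ++ Q) = ts ++ tauStack Q := by
  cases ts with
  | nil => simp [lambdaL]
  | cons t ts' =>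
    rw [lambdaL, List.append_assoc, tauStack_lambdaT t (lambdaL ts' ++ Q),
      tauStack_lambdaL ts' Q]
    simp
end

theorem tau_lambdaT (T : PTree) : tau (lambdaT T) = T := by
  have := tauStack_lambdaT T []
  simp at this
  simp [tau, this]

end Luka
namespace Luka

theorem lthornL_succ (ts : List PTree) : ∀ i, lthornL (i+1) ts = lthornL i ts + internCountL ts := by
  induction ts with
  | nil => intro i; simp [lthornL, internCountL]
  | cons t ts ih =>
    intro i
    rw [lthornL, lthornL, ih (i+1), internCountL]
    ring

mutual
theorem treeSum (T : PTree) (cur v : ℕ) (st : List ℕ) (rest : List ℤ) :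
    (depthVecAux cur (v::st) (lambdaT T ++ rest)).sum
      = lthornT T + cur * internCount T + (depthVecAux v st rest).sum := by
  cases T with
  | node ts =>
    cases ts with
    | nil =>
      simp only [lambdaT, lambdaL, List.singleton_append]
      norm_num [depthVecAux, lthornT, lthornL, internCount, children]
    | cons t ts' =>
      rw [lambdaT, List.cons_append]
      have h0 : (0:ℤ) ≤ ((t :: ts').length : ℤ) - 1 := by simp
      rw [depthVecAux, if_pos h0]
      have htn : (((t :: ts').length : ℤ) - 1).toNat = (t :: ts').length - 1 := by
        simp
      rw [htn, List.sum_cons]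
      rw [listSum (t :: ts') (by simp) cur v st rest]
      have hic : internCount (PTree.node (t :: ts')) = 1 + internCountL (t :: ts') := by
        rw [internCount]
      rw [lthornT, hic]
      ring
theorem listSum (ts : List PTree) (hne : ts ≠ []) (cur v : ℕ) (st : List ℕ) (rest : List ℤ) :
    (depthVecAux cur ((List.range (ts.length - 1)).map (fun i => cur + i + 1) ++ v :: st)
        (lambdaL ts ++ rest)).sum
      = lthornL 0 ts + cur * internCountL ts + (depthVecAux v st rest).sum := by
  cases ts with
  | nil => exact absurd rfl hne
  | cons t ts' =>
    cases ts' with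
    | nil =>
      simp only [List.length_cons, List.length_nil, Nat.add_sub_cancel, List.range_zero,
        List.map_nil, List.nil_append, lambdaL, List.append_nil]
      rw [treeSum t cur v st rest]
      simp [lthornL, internCountL]
    | cons t2 ts2 =>
      have hlen : (t :: t2 :: ts2).length - 1 = ts2.length + 1 := by simp
      have hrange : (List.range ((t :: t2 :: ts2).length - 1)).map (fun i => cur + i + 1)
          = (cur + 1) :: (List.range ((t2 :: ts2).length - 1)).map (fun i => (cur + 1) + i + 1) := by
        rw [hlen, List.range_succ_eq_map, List.map_cons, List.map_map]
        simp only [List.length_cons, Nat.add_sub_cancel]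
        refine congrArg₂ List.cons (by omega) (List.map_congr_left fun a _ => ?_)
        simp [Function.comp]
        omega
      rw [hrange, lambdaL, List.append_assoc, List.cons_append]
      rw [treeSum t cur (cur + 1)
        ((List.range ((t2 :: ts2).length - 1)).map (fun i => (cur + 1) + i + 1) ++ v :: st)
        (lambdaL (t2 :: ts2) ++ rest)]
      rw [listSum (t2 :: ts2) (by simp) (cur + 1) v st rest]
      simp only [lthornL, internCountL, lthornL_succ]
      ring
end

end Luka
namespace Luka

theorem depthVecAux_ext : ∀ (P : List ℤ) (cur : ℕ) (st ex : List ℕ),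
    (∀ n (hn : n + 1 < P.length), P[n]'(Nat.lt_of_succ_lt hn) < 0 →
      1 ≤ (st.length : ℤ) + (P.take n).sum) →
    depthVecAux cur (st ++ ex) P = depthVecAux cur st P := by
  intro P
  induction P with
  | nil => intro cur st ex _; rfl
  | cons s P ih =>
    intro cur st ex h
    by_cases hs : 0 ≤ s
    · rw [depthVecAux_up hs, depthVecAux_up hs, ← List.append_assoc]
      congr 1
      apply ih
      intro n hn hneg
      have := h (n + 1) (by simpa using hn) (by simpa using hneg)
      simp only [List.length_append, List.length_map, List.length_range,
        List.take_succ_cons, List.sum_cons] at this ⊢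
      push_cast at this ⊢
      omega
    · cases P with
      | nil =>
        cases st with
        | nil =>
          cases ex with
          | nil => rfl
          | cons v ex =>
            rw [List.nil_append, depthVecAux_down hs, depthVecAux_down_nil hs]
            rfl
        | cons w st =>
          rw [List.cons_append, depthVecAux_down hs, depthVecAux_down hs]
          rfl
      | cons s' P' =>
        have h0 := h 0 (by simp) (by simpa using not_le.mp hs)
        cases st with
        | nil => simp at h0
        | cons w st =>
          rw [List.cons_append, depthVecAux_down hs, depthVecAux_down hs]
          apply ih
          intro n hn hneg
          have := h (n + 1) (by simpa using hn) (by simpa using hneg)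
          simp only [List.take_succ_cons, List.sum_cons, List.length_cons] at this ⊢
          push_cast at this ⊢
          omega
end Luka
namespace Luka

theorem split_cat : ∀ (N : ℕ) (Q : List ℤ) (c : ℕ), Q.length ≤ N →
    (∀ s ∈ Q, -1 ≤ s) → Q.sum = -(c:ℤ) →
    (∀ n, n < Q.length → -(c:ℤ) < (Q.take n).sum) →
    (∀ R : List ℤ, R.length ≤ Q.length → IsLukas R → ∃ T, R = lambdaT T) →
    ∃ ts : List PTree, ts.length = c ∧ Q = lambdaL ts := by
  intro N
  induction N with
  | zero =>
    intro Q c hlen _ hsum _ _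
    have hQ : Q = [] := List.length_eq_zero_iff.mp (Nat.le_zero.mp hlen)
    subst hQ
    have : c = 0 := by simp at hsum; omega
    exact ⟨[], by simp [this, lambdaL]⟩
  | succ N ih =>
    intro Q c hlen hmem hsum hpre H
    match c with
    | 0 =>
      have hQ : Q = [] := by
        by_contra hne
        have h0 : 0 < Q.length := List.length_pos_iff.mpr hne
        have := hpre 0 h0
        simp at this
      exact ⟨[], by simp [hQ, lambdaL]⟩
    | c' + 1 =>
      have hQne : Q ≠ [] := by
        intro hQ; rw [hQ] at hsum; simp at hsum; omega
      have hex : ∃ n, (Q.take n).sum ≤ -1 := ⟨Q.length, by rw [List.take_length, hsum]; omega⟩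
      set n := Nat.find hex with hn_def
      have hn : (Q.take n).sum ≤ -1 := Nat.find_spec hex
      have hmin : ∀ m, m < n → 0 ≤ (Q.take m).sum := by
        intro m hm
        have := Nat.find_min hex hm
        omega
      have hnle : n ≤ Q.length := Nat.find_min' hex (by rw [List.take_length, hsum]; omega)
      have hn1 : 1 ≤ n := by
        rcases Nat.eq_zero_or_pos n with h | h
        · rw [h] at hn; simp at hn
        · exact h
      have hn1lt : n - 1 < Q.length := by omega
      have hstep : (Q.take n).sum = (Q.take (n-1)).sum + Q[n-1] := by
        have := List.sum_take_succ Q (n-1) hn1lt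
        rw [Nat.sub_add_cancel hn1] at this
        exact this
      have hQmem : -1 ≤ Q[n-1] := hmem _ (List.getElem_mem hn1lt)
      have hprev : 0 ≤ (Q.take (n-1)).sum := hmin (n-1) (by omega)
      have hEq : (Q.take n).sum = -1 := by omega
      -- Q1 := Q.take n is Lukas
      have hQ1len : (Q.take n).length = n := by
        rw [List.length_take]; omega
      have hQ1 : IsLukas (Q.take n) := by
        refine ⟨?_, ?_, ?_, hEq⟩
        · intro h
          rw [h] at hQ1len; simp at hQ1len; omega
        · intro s hs; exact hmem s (List.take_subset n Q hs)
        · intro m hm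
          rw [hQ1len] at hm
          rw [List.take_take]
          rw [min_eq_left (le_of_lt hm)]
          exact hmin m hm
      obtain ⟨T, hT⟩ := H (Q.take n) (by omega) hQ1
      -- Q2 := Q.drop n
      have hsplit : Q.take n ++ Q.drop n = Q := List.take_append_drop n Q
      have hQ2sum : (Q.drop n).sum = -(c' : ℤ) := by
        have : (Q.take n).sum + (Q.drop n).sum = Q.sum := by
          rw [← List.sum_append, hsplit]
        rw [hEq, hsum] at this
        push_cast at this ⊢
        omega
      have hQ2len : (Q.drop n).length = Q.length - n := List.length_drop
      have hQ2pre : ∀ m, m < (Q.drop n).length → -(c' : ℤ) < ((Q.drop n).take m).sum := by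
        intro m hm
        have hnm : n + m < Q.length := by omega
        have h1 := hpre (n + m) hnm
        have h2 : Q.take (n + m) = Q.take n ++ (Q.drop n).take m := List.take_add
        rw [h2, List.sum_append, hEq] at h1
        push_cast at h1 ⊢
        omega
      obtain ⟨ts', hts'len, hts'⟩ := ih (Q.drop n) c' (by omega)
        (fun s hs => hmem s (List.drop_subset n Q hs)) hQ2sum hQ2pre
        (fun R hR hRl => H R (by omega) hRl)
      refine ⟨T :: ts', by simp [hts'len], ?_⟩
      rw [lambdaL, ← hT, ← hts', hsplit]

theorem exists_tree : ∀ (N : ℕ) (P : List ℤ), P.length ≤ N → IsLukas P → ∃ T, P = lambdaT T := by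
  intro N
  induction N with
  | zero =>
    intro P hlen hP
    exact absurd (List.length_eq_zero_iff.mp (Nat.le_zero.mp hlen)) hP.1
  | succ N ih =>
    intro P hlen hP
    obtain ⟨hne, hmem, hpre, hsum⟩ := hP
    cases P with
    | nil => exact absurd rfl hne
    | cons s Q =>
      cases Q with
      | nil =>
        have : s = -1 := by simpa using hsum
        exact ⟨.node [], by simp [lambdaT, lambdaL, this]⟩
      | cons s' Q' =>
        have hs : 0 ≤ s := by
          have := hpre 1 (by simp)
          simpa using this
        have hcast : ((s.toNat : ℤ)) = s := Int.toNat_of_nonneg hs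
        have hQsum : (s' :: Q').sum = -((s.toNat + 1 : ℕ) : ℤ) := by
          have : s + (s' :: Q').sum = -1 := by simpa using hsum
          push_cast
          omega
        have hQpre : ∀ m, m < (s' :: Q').length → -((s.toNat + 1 : ℕ) : ℤ) < ((s' :: Q').take m).sum := by
          intro m hm
          have h1 := hpre (m + 1) (by simpa using hm)
          rw [List.take_succ_cons, List.sum_cons] at h1
          push_cast
          omega
        obtain ⟨ts, htslen, hts⟩ := split_cat (s' :: Q').length (s' :: Q') (s.toNat + 1) le_rfl
          (fun x hx => hmem x (List.mem_cons_of_mem s hx)) hQsum hQpre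
          (fun R hR hRl => ih R (by simp only [List.length_cons] at hlen hR ⊢; omega) hRl)
        refine ⟨.node ts, ?_⟩
        rw [lambdaT, ← hts, htslen]
        congr 1
        push_cast
        omega

end Luka

open Luka in
/-- **Proposition 3.4.**  Let `P` be a Łukasiewicz path and `T = τ(P)` the plane tree
associated to `P` by the classical bijection.  Then `depth(P) = lthorn(T)`. -/
theorem depth_eq_lthorn_tau (P : List ℤ) (hP : IsLukas P) :
    depth P = lthornT (tau P) := by
  obtain ⟨T, hT⟩ := exists_tree P.length P le_rfl hP
  have htau : tau P = T := by rw [hT, tau_lambdaT]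
  rw [htau]
  obtain ⟨hne, hmem, hpre, hsum⟩ := hP
  have hext : depthVecAux 0 [0] P = depthVecAux 0 [] P := by
    have := depthVecAux_ext P 0 [] [0] ?_
    · simpa using this
    · intro n hn hneg
      have h1 := hpre (n + 1) hn
      rw [List.sum_take_succ P n (Nat.lt_of_succ_lt hn)] at h1
      simp only [List.length_nil, Nat.cast_zero, zero_add]
      omega
  rw [depth, depthVec, ← hext, hT]
  have h2 := treeSum T 0 0 [] []
  rw [List.append_nil] at h2
  rw [h2]
  simp [depthVecAux]
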